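/- The 'before' operation on strategies is functorial: for strategies σ : A ⊸ B, σ' : B ⊸ C, τ : D ⊸ E, τ' : E ⊸ F, one has (σ' ◁ τ') ∘ (σ ◁ τ) = (σ' ∘ σ) ◁ (τ' ∘ τ), where σ ◁ τ is the disjoint union of the orders ≤_σ and ≤_τ. -/

import Mathlib

/-!
Games are given by a type of moves `α`, a polarity function `α → Bool`
(`false` = Opponent = −1, `true` = Proponent = +1) and a well-founded partial
order (the causality order).
-/

/-- Disjoint union of two relations on a sum type. -/
def sumRel {α β : Type*} (r : α → α → Prop) (s : β → β → Prop) :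
    α ⊕ β → α ⊕ β → Prop
  | Sum.inl a, Sum.inl a' => r a a'
  | Sum.inr b, Sum.inr b' => s b b'
  | _, _ => False

/-- The causality order of a game: a well-founded partial order. -/
def IsGame {α : Type*} (le : α → α → Prop) : Prop :=
  (∀ a, le a a) ∧ (∀ a b c, le a b → le b c → le a c) ∧
  (∀ a b, le a b → le b a → a = b) ∧
  WellFounded (fun a b => le a b ∧ a ≠ b)

/-- The polarity function of the arrow game `A ⊸ B = A* ⊗ B`: polarities are
inverted on the left component. -/
def arrowPol {α β : Type*} (lamA : α → Bool) (lamB : β → Bool) : α ⊕ β → Bool :=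
  Sum.elim (fun a => !(lamA a)) lamB

/-- The causality order of the tensor game `A ⊗ B` (or of `A ⊸ B`). -/
def tensLe {α β : Type*} (leA : α → α → Prop) (leB : β → β → Prop) :
    α ⊕ β → α ⊕ β → Prop :=
  sumRel leA leB

/-- A strategy on the game `(lam, leG)`: a partial order `les` on moves such
that `m <ₛ n` implies `m` is Opponent and `n` is Proponent (polarity), and the
transitive closure of `les ∪ leG` is still a partial order (acyclicity). -/
def IsStrategy {α : Type*} (lam : α → Bool) (leG : α → α → Prop)
    (les : α → α → Prop) : Prop :=
  (∀ a, les a a) ∧ (∀ a b c, les a b → les b c → les a c) ∧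
  (∀ a b, les a b → les b a → a = b) ∧
  (∀ a b, les a b → a ≠ b → lam a = false ∧ lam b = true) ∧
  (∀ a b, Relation.ReflTransGen (fun x y => les x y ∨ leG x y) a b →
          Relation.ReflTransGen (fun x y => les x y ∨ leG x y) b a → a = b)

/-- Direct image of a relation along a function. -/
def relMap {α β : Type*} (f : α → β) (r : α → α → Prop) : β → β → Prop :=
  fun x y => ∃ a a', r a a' ∧ f a = x ∧ f a' = y

/-- The composite of a strategy `σ` on `A ⊸ B` and a strategy `τ` on `B ⊸ C`:
the restriction to the moves of `A` and `C` of the (reflexive) transitive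
closure of the union of `≤σ` and `≤τ`, both seen as relations on the moves of
`A`, `B` and `C`. -/
def stratComp {α β γ : Type*} (σ : α ⊕ β → α ⊕ β → Prop)
    (τ : β ⊕ γ → β ⊕ γ → Prop) : α ⊕ γ → α ⊕ γ → Prop :=
  fun x y =>
    Relation.ReflTransGen
      (fun u v => relMap (Sum.map id Sum.inl) σ u v ∨ relMap Sum.inr τ u v)
      (Sum.map id Sum.inr x) (Sum.map id Sum.inr y)

/-- The causality order of the game `A ◁ B` (`A` before `B`). -/
def beforeLe {α β : Type*} (leA : α → α → Prop) (leB : β → β → Prop) :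
    α ⊕ β → α ⊕ β → Prop :=
  Relation.TransGen
    (fun x y => tensLe leA leB x y ∨ ∃ a b, x = Sum.inl a ∧ y = Sum.inr b)

/-- The strategy `σ ◁ τ : (A ◁ C) ⊸ (B ◁ D)` associated to strategies
`σ : A ⊸ B` and `τ : C ⊸ D`: the disjoint union of the orders `≤σ` and `≤τ`. -/
def stratBefore {A B C D : Type*}
    (σ : A ⊕ B → A ⊕ B → Prop) (τ : C ⊕ D → C ⊕ D → Prop) :
    (A ⊕ C) ⊕ (B ⊕ D) → (A ⊕ C) ⊕ (B ⊕ D) → Prop :=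
  fun x y => relMap (Sum.map Sum.inl Sum.inl) σ x y ∨
             relMap (Sum.map Sum.inr Sum.inr) τ x y

namespace StratBeforeAux

open Relation

/-! ### Generalities on `relMap`, `sumRel` and reflexive transitive closures -/

lemma relMap_or {α β : Type*} (f : α → β) (r s : α → α → Prop) (u v : β) :
    relMap f (fun p q => r p q ∨ s p q) u v ↔ relMap f r u v ∨ relMap f s u v := by
  unfold relMap
  constructor
  · rintro ⟨a, a', (h | h), rfl, rfl⟩
    · exact Or.inl ⟨a, a', h, rfl, rfl⟩
    · exact Or.inr ⟨a, a', h, rfl, rfl⟩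
  · rintro (⟨a, a', h, rfl, rfl⟩ | ⟨a, a', h, rfl, rfl⟩)
    · exact ⟨a, a', Or.inl h, rfl, rfl⟩
    · exact ⟨a, a', Or.inr h, rfl, rfl⟩

lemma relMap_relMap {α β γ : Type*} (g : β → γ) (f : α → β) (r : α → α → Prop)
    (u v : γ) : relMap g (relMap f r) u v ↔ relMap (fun a => g (f a)) r u v := by
  unfold relMap
  constructor
  · rintro ⟨p, p', ⟨a, a', h, rfl, rfl⟩, rfl, rfl⟩
    exact ⟨a, a', h, rfl, rfl⟩
  · rintro ⟨a, a', h, rfl, rfl⟩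
    exact ⟨f a, f a', ⟨a, a', h, rfl, rfl⟩, rfl, rfl⟩

lemma relMap_congr {α β : Type*} {f g : α → β} (h : ∀ a, f a = g a)
    (r : α → α → Prop) (u v : β) : relMap f r u v ↔ relMap g r u v := by
  unfold relMap
  constructor <;> rintro ⟨a, a', hr, rfl, rfl⟩ <;>
    exact ⟨a, a', hr, by rw [h], by rw [h]⟩

lemma sumRel_eq_relMap {α β : Type*} (r : α → α → Prop) (s : β → β → Prop)
    (x y : α ⊕ β) :
    sumRel r s x y ↔ relMap Sum.inl r x y ∨ relMap Sum.inr s x y := by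
  rcases x with a | b <;> rcases y with a' | b' <;> simp [sumRel, relMap]

lemma relMap_comap {α β γ : Type*} (h : β → γ) (h' : γ → β)
    (hl : ∀ b, h' (h b) = b) (hr : ∀ c, h (h' c) = c)
    (f : α → γ) (r : α → α → Prop) (u v : β) :
    relMap f r (h u) (h v) ↔ relMap (fun a => h' (f a)) r u v := by
  unfold relMap
  constructor
  · rintro ⟨a, a', hra, ha, ha'⟩
    refine ⟨a, a', hra, ?_, ?_⟩
    · show h' (f a) = u; rw [ha, hl]
    · show h' (f a') = v; rw [ha', hl]
  · rintro ⟨a, a', hra, ha, ha'⟩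
    refine ⟨a, a', hra, ?_, ?_⟩
    · have := congrArg h ha
      dsimp only at this
      rwa [hr] at this
    · have := congrArg h ha'
      dsimp only at this
      rwa [hr] at this

/-- Splitting a reflexive transitive closure of a disjoint union of relations. -/
lemma rtg_sumRel_cases {α β : Type*} {r : α → α → Prop} {s : β → β → Prop}
    {x y : α ⊕ β} (h : ReflTransGen (sumRel r s) x y) :
    (∃ a a', x = Sum.inl a ∧ y = Sum.inl a' ∧ ReflTransGen r a a') ∨
    (∃ b b', x = Sum.inr b ∧ y = Sum.inr b' ∧ ReflTransGen s b b') := by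
  induction h with
  | refl =>
    cases x with
    | inl a => exact Or.inl ⟨a, a, rfl, rfl, .refl⟩
    | inr b => exact Or.inr ⟨b, b, rfl, rfl, .refl⟩
  | @tail c d h1 h2 ih =>
    rcases ih with ⟨a, a', rfl, hc, hrr⟩ | ⟨b, b', rfl, hc, hs⟩
    · subst hc
      cases d with
      | inl a'' => exact Or.inl ⟨a, a'', rfl, rfl, hrr.tail h2⟩
      | inr _ => exact (h2 : False).elim
    · subst hc
      cases d with
      | inl _ => exact (h2 : False).elim
      | inr b'' => exact Or.inr ⟨b, b'', rfl, rfl, hs.tail h2⟩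

lemma rtg_sumRel_inl {α β : Type*} {r : α → α → Prop} {s : β → β → Prop}
    {a a' : α} (h : ReflTransGen r a a') :
    ReflTransGen (sumRel r s) (Sum.inl a : α ⊕ β) (Sum.inl a') := by
  induction h with
  | refl => exact .refl
  | tail _ h2 ih => exact ih.tail (by exact h2)

lemma rtg_sumRel_inr {α β : Type*} {r : α → α → Prop} {s : β → β → Prop}
    {b b' : β} (h : ReflTransGen s b b') :
    ReflTransGen (sumRel r s) (Sum.inr b : α ⊕ β) (Sum.inr b') := by
  induction h with
  | refl => exact .refl
  | tail _ h2 ih => exact ih.tail (by exact h2)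

lemma rtg_sumRel_iff {α β : Type*} {r : α → α → Prop} {s : β → β → Prop}
    {x y : α ⊕ β} :
    ReflTransGen (sumRel r s) x y ↔
    (∃ a a', x = Sum.inl a ∧ y = Sum.inl a' ∧ ReflTransGen r a a') ∨
    (∃ b b', x = Sum.inr b ∧ y = Sum.inr b' ∧ ReflTransGen s b b') := by
  constructor
  · exact rtg_sumRel_cases
  · rintro (⟨a, a', rfl, rfl, h⟩ | ⟨b, b', rfl, rfl, h⟩)
    · exact rtg_sumRel_inl h
    · exact rtg_sumRel_inr h

/-- Transport of reflexive transitive closure along a bijection. -/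
lemma rtg_comap {α β : Type*} (h : α → β) (h' : β → α)
    (hl : ∀ a, h' (h a) = a) (hr : ∀ b, h (h' b) = b)
    (S : β → β → Prop) (x y : α) :
    ReflTransGen (fun u v => S (h u) (h v)) x y ↔ ReflTransGen S (h x) (h y) := by
  constructor
  · intro hxy
    induction hxy with
    | refl => exact .refl
    | tail _ h2 ih => exact ih.tail h2
  · intro hxy
    have key : ∀ p q, ReflTransGen S p q → ∀ u v, h u = p → h v = q →
        ReflTransGen (fun u v => S (h u) (h v)) u v := by
      intro p q hpq
      induction hpq with
      | refl =>
        intro u v hu hv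
        have : u = v := by
          have := congrArg h' (hu.trans hv.symm)
          rwa [hl, hl] at this
        exact this ▸ .refl
      | @tail q r h1 h2 ih =>
        intro u v hu hv
        exact (ih u (h' q) hu (hr q)).tail (by rw [hr q, hv]; exact h2)
    exact key _ _ hxy x y rfl rfl

lemma rtg_congr {α : Type*} {R T : α → α → Prop} (h : ∀ u v, R u v ↔ T u v)
    {x y : α} : ReflTransGen R x y ↔ ReflTransGen T x y :=
  ⟨fun hh => ReflTransGen.mono (fun u v huv => (h u v).mp huv) _ _ hh,
   fun hh => ReflTransGen.mono (fun u v huv => (h u v).mpr huv) _ _ hh⟩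

/-! ### The bijection on interaction moves -/

/-- The bijection between the interaction moves of `(σ ◁ τ) ; (σ' ◁ τ')` and
the disjoint union of those of `σ ; σ'` and `τ ; τ'`. -/
def hmap {A B C D E F : Type*} :
    (A ⊕ D) ⊕ ((B ⊕ E) ⊕ (C ⊕ F)) → (A ⊕ (B ⊕ C)) ⊕ (D ⊕ (E ⊕ F))
  | .inl (.inl a) => .inl (.inl a)
  | .inl (.inr d) => .inr (.inl d)
  | .inr (.inl (.inl b)) => .inl (.inr (.inl b))
  | .inr (.inl (.inr e)) => .inr (.inr (.inl e))
  | .inr (.inr (.inl c)) => .inl (.inr (.inr c))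
  | .inr (.inr (.inr f)) => .inr (.inr (.inr f))

def hinv {A B C D E F : Type*} :
    (A ⊕ (B ⊕ C)) ⊕ (D ⊕ (E ⊕ F)) → (A ⊕ D) ⊕ ((B ⊕ E) ⊕ (C ⊕ F))
  | .inl (.inl a) => .inl (.inl a)
  | .inl (.inr (.inl b)) => .inr (.inl (.inl b))
  | .inl (.inr (.inr c)) => .inr (.inr (.inl c))
  | .inr (.inl d) => .inl (.inr d)
  | .inr (.inr (.inl e)) => .inr (.inl (.inr e))
  | .inr (.inr (.inr f)) => .inr (.inr (.inr f))

lemma hinv_hmap {A B C D E F : Type*} (x : (A ⊕ D) ⊕ ((B ⊕ E) ⊕ (C ⊕ F))) :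
    hinv (hmap x) = x := by
  rcases x with (a | d) | ((b | e) | (c | f)) <;> rfl

lemma hmap_hinv {A B C D E F : Type*} (x : (A ⊕ (B ⊕ C)) ⊕ (D ⊕ (E ⊕ F))) :
    hmap (hinv x) = x := by
  rcases x with (a | (b | c)) | (d | (e | f)) <;> rfl

/-! ### The key step lemma -/

/-- The one-step interaction relation of `(σ ◁ τ) ; (σ' ◁ τ')` is, modulo
`hmap`, the disjoint union of the one-step interaction relations of `σ ; σ'`
and `τ ; τ'`. -/
lemma step_iff {A B C D E F : Type*}
    (σ : A ⊕ B → A ⊕ B → Prop) (σ' : B ⊕ C → B ⊕ C → Prop)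
    (τ : D ⊕ E → D ⊕ E → Prop) (τ' : E ⊕ F → E ⊕ F → Prop)
    (u v : (A ⊕ D) ⊕ ((B ⊕ E) ⊕ (C ⊕ F))) :
    (relMap (Sum.map id Sum.inl) (stratBefore σ τ) u v ∨
     relMap Sum.inr (stratBefore σ' τ') u v) ↔
    sumRel
      (fun p q => relMap (Sum.map id Sum.inl) σ p q ∨ relMap Sum.inr σ' p q)
      (fun p q => relMap (Sum.map id Sum.inl) τ p q ∨ relMap Sum.inr τ' p q)
      (hmap u) (hmap v) := by
  rw [sumRel_eq_relMap, relMap_comap hmap hinv hinv_hmap hmap_hinv,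
      relMap_comap hmap hinv hinv_hmap hmap_hinv,
      relMap_or, relMap_relMap, relMap_relMap,
      relMap_or, relMap_relMap, relMap_relMap]
  unfold stratBefore
  rw [relMap_or, relMap_relMap, relMap_relMap,
      relMap_or, relMap_relMap, relMap_relMap]
  have e1 : ∀ p : A ⊕ B,
      (Sum.map id Sum.inl (Sum.map Sum.inl Sum.inl p) :
        (A ⊕ D) ⊕ ((B ⊕ E) ⊕ (C ⊕ F)))
        = hinv (Sum.inl (Sum.map id Sum.inl p) :
            (A ⊕ (B ⊕ C)) ⊕ (D ⊕ (E ⊕ F))) := by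
    rintro (a | b) <;> rfl
  have e2 : ∀ p : D ⊕ E,
      (Sum.map id Sum.inl (Sum.map Sum.inr Sum.inr p) :
        (A ⊕ D) ⊕ ((B ⊕ E) ⊕ (C ⊕ F)))
        = hinv (Sum.inr (Sum.map id Sum.inl p) :
            (A ⊕ (B ⊕ C)) ⊕ (D ⊕ (E ⊕ F))) := by
    rintro (d | e) <;> rfl
  have e3 : ∀ p : B ⊕ C,
      (Sum.inr (Sum.map Sum.inl Sum.inl p) :
        (A ⊕ D) ⊕ ((B ⊕ E) ⊕ (C ⊕ F))) = hinv (Sum.inl (Sum.inr p) :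
            (A ⊕ (B ⊕ C)) ⊕ (D ⊕ (E ⊕ F))) := by
    rintro (b | c) <;> rfl
  have e4 : ∀ p : E ⊕ F,
      (Sum.inr (Sum.map Sum.inr Sum.inr p) :
        (A ⊕ D) ⊕ ((B ⊕ E) ⊕ (C ⊕ F))) = hinv (Sum.inr (Sum.inr p) :
            (A ⊕ (B ⊕ C)) ⊕ (D ⊕ (E ⊕ F))) := by
    rintro (e | f) <;> rfl
  rw [relMap_congr e1, relMap_congr e2, relMap_congr e3, relMap_congr e4]
  tauto

end StratBeforeAux

namespace StratBeforeAux

lemma hmap_map_inl {A B C D E F : Type*} {x : (A ⊕ D) ⊕ (C ⊕ F)}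
    {p : A ⊕ (B ⊕ C)} :
    hmap (Sum.map id Sum.inr x) = (Sum.inl p : (A ⊕ (B ⊕ C)) ⊕ (D ⊕ (E ⊕ F))) ↔
    ∃ u : A ⊕ C, Sum.map id Sum.inr u = p ∧ Sum.map Sum.inl Sum.inl u = x := by
  rcases x with (a | d) | (c | f) <;> rcases p with a' | (b' | c') <;>
    simp [hmap, Sum.map, Sum.exists, eq_comm]

lemma hmap_map_inr {A B C D E F : Type*} {x : (A ⊕ D) ⊕ (C ⊕ F)}
    {q : D ⊕ (E ⊕ F)} :
    hmap (Sum.map id Sum.inr x) = (Sum.inr q : (A ⊕ (B ⊕ C)) ⊕ (D ⊕ (E ⊕ F))) ↔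
    ∃ u : D ⊕ F, Sum.map id Sum.inr u = q ∧ Sum.map Sum.inr Sum.inr u = x := by
  rcases x with (a | d) | (c | f) <;> rcases q with d' | (e' | f') <;>
    simp [hmap, Sum.map, Sum.exists, eq_comm]

end StratBeforeAux

open StratBeforeAux in
/-- The 'before' operation on strategies is functorial:
`(σ' ◁ τ') ∘ (σ ◁ τ) = (σ' ∘ σ) ◁ (τ' ∘ τ)` for strategies `σ : A ⊸ B`,
`σ' : B ⊸ C`, `τ : D ⊸ E`, `τ' : E ⊸ F`. -/
theorem stratBefore_functorial {A B C D E F : Type*}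
    (lamA : A → Bool) (lamB : B → Bool) (lamC : C → Bool)
    (lamD : D → Bool) (lamE : E → Bool) (lamF : F → Bool)
    (leA : A → A → Prop) (leB : B → B → Prop) (leC : C → C → Prop)
    (leD : D → D → Prop) (leE : E → E → Prop) (leF : F → F → Prop)
    (hA : IsGame leA) (hB : IsGame leB) (hC : IsGame leC)
    (hD : IsGame leD) (hE : IsGame leE) (hF : IsGame leF)
    (σ : A ⊕ B → A ⊕ B → Prop) (σ' : B ⊕ C → B ⊕ C → Prop)
    (τ : D ⊕ E → D ⊕ E → Prop) (τ' : E ⊕ F → E ⊕ F → Prop)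
    (hσ : IsStrategy (arrowPol lamA lamB) (tensLe leA leB) σ)
    (hσ' : IsStrategy (arrowPol lamB lamC) (tensLe leB leC) σ')
    (hτ : IsStrategy (arrowPol lamD lamE) (tensLe leD leE) τ)
    (hτ' : IsStrategy (arrowPol lamE lamF) (tensLe leE leF) τ') :
    ∀ x y, stratComp (stratBefore σ τ) (stratBefore σ' τ') x y ↔
      stratBefore (stratComp σ σ') (stratComp τ τ') x y := by
  intro x y
  show Relation.ReflTransGen _ _ _ ↔ _
  rw [rtg_congr (step_iff σ σ' τ τ'),
      rtg_comap hmap hinv hinv_hmap hmap_hinv, rtg_sumRel_iff]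
  constructor
  · rintro (⟨p, p', hx, hy, hrtg⟩ | ⟨q, q', hx, hy, hrtg⟩)
    · obtain ⟨u, rfl, rfl⟩ := hmap_map_inl.mp hx
      obtain ⟨u', rfl, rfl⟩ := hmap_map_inl.mp hy
      exact Or.inl ⟨u, u', hrtg, rfl, rfl⟩
    · obtain ⟨u, rfl, rfl⟩ := hmap_map_inr.mp hx
      obtain ⟨u', rfl, rfl⟩ := hmap_map_inr.mp hy
      exact Or.inr ⟨u, u', hrtg, rfl, rfl⟩
  · rintro (⟨u, u', hc, rfl, rfl⟩ | ⟨u, u', hc, rfl, rfl⟩)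
    · exact Or.inl ⟨_, _, hmap_map_inl.mpr ⟨u, rfl, rfl⟩,
        hmap_map_inl.mpr ⟨u', rfl, rfl⟩, hc⟩
    · exact Or.inr ⟨_, _, hmap_map_inr.mpr ⟨u, rfl, rfl⟩,
        hmap_map_inr.mpr ⟨u', rfl, rfl⟩, hc⟩
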